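/- Let H₁ and H₂ be finite sets of points with multiplicity structures in kⁿ such that no point of H₁ shares its last coordinate with any point of H₂. Then I(H₁ ∪ H₂) = I(H₁) ∩ I(H₂), and with p₁ = ∏_{fibres c of H₁}(X_n - c)^{w_c+1} ∈ I(H₁) ∩ k[X_n] and p₂ the analogous polynomial for H₂, we have gcd(p₁, p₂) = 1 and f₁·p₂ + f₂·p₁ ∈ I(H₁ ∪ H₂) for any f₁ ∈ I(H₁), f₂ ∈ I(H₂). -/

import Mathlib

def IsLowerSetN {n : ℕ} (D : Set (Fin n → ℕ)) : Prop :=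
  ∀ d ∈ D, ∀ i : Fin n, d i ≠ 0 → Function.update d i (d i - 1) ∈ D

noncomputable def mderiv {n : ℕ} {k : Type*} [CommSemiring k]
    (d : Fin n → ℕ) (f : MvPolynomial (Fin n) k) : MvPolynomial (Fin n) k :=
  (List.finRange n).foldr (fun i g => (fun h => MvPolynomial.pderiv i h)^[d i] g) f

open MvPolynomial

/-- The set of polynomials annihilated by all derivative functionals of the
configuration of points `p` with multiplicity structures `D`. -/
def vset {n : ℕ} {k : Type*} [Field k] {ι : Type*} [Fintype ι]
    (p : ι → (Fin (n + 1) → k)) (D : ι → Finset (Fin (n + 1) → ℕ)) :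
    Set (MvPolynomial (Fin (n + 1)) k) :=
  {f | ∀ j : ι, ∀ d ∈ D j, eval (p j) (mderiv d f) = 0}

/-- `∏_{fibres c}(X_n - c)^{w_c+1}`, product over the distinct last coordinates `c`
of the points, `w_c` the maximal last component of multi-indices in that fibre. -/
noncomputable def fibPoly {n : ℕ} {k : Type*} [Field k] [DecidableEq k]
    {ι : Type*} [Fintype ι] [DecidableEq ι]
    (p : ι → (Fin (n + 1) → k)) (D : ι → Finset (Fin (n + 1) → ℕ)) :
    MvPolynomial (Fin (n + 1)) k :=
  ∏ c ∈ Finset.univ.image (fun j => p j (Fin.last n)),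
    (X (Fin.last n) - C c) ^
      ((Finset.univ.filter (fun j => p j (Fin.last n) = c)).sup
        (fun j => (D j).sup (fun d => d (Fin.last n))) + 1)


section helperlemmas

variable {N : ℕ} {k : Type*} [CommSemiring k]

lemma pderiv_comm' (i j : Fin N) (f : MvPolynomial (Fin N) k) :
    pderiv i (pderiv j f) = pderiv j (pderiv i f) := by
  induction f using MvPolynomial.induction_on' with
  | add f g hf hg => simp [map_add, hf, hg]
  | monomial m a =>
    rcases eq_or_ne i j with rfl | hij
    · rfl
    · simp only [pderiv_monomial]
      rw [show m - Finsupp.single j 1 - Finsupp.single i 1 = m - Finsupp.single i 1 - Finsupp.single j 1 by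
        ext x; simp [Finsupp.tsub_apply]; omega]
      congr 1
      rw [Finsupp.tsub_apply, Finsupp.tsub_apply, Finsupp.single_apply, Finsupp.single_apply,
        if_neg hij, if_neg hij.symm]
      push_cast [Nat.sub_zero]
      ring

lemma iter_add (i : Fin N) (t : ℕ) (f g : MvPolynomial (Fin N) k) :
    (fun h => pderiv i h)^[t] (f + g)
      = (fun h => pderiv i h)^[t] f + (fun h => pderiv i h)^[t] g := by
  induction t with
  | zero => rfl
  | succ t ih => simp [Function.iterate_succ_apply', ih, map_add]

lemma iter_comm (i j : Fin N) (t : ℕ) (f : MvPolynomial (Fin N) k) :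
    pderiv i ((fun h => pderiv j h)^[t] f) = (fun h => pderiv j h)^[t] (pderiv i f) := by
  induction t with
  | zero => rfl
  | succ t ih => rw [Function.iterate_succ_apply', Function.iterate_succ_apply', pderiv_comm', ih]

lemma foldr_add (l : List (Fin N)) (d : Fin N → ℕ) (f g : MvPolynomial (Fin N) k) :
    l.foldr (fun i h => (fun h' => pderiv i h')^[d i] h) (f + g)
      = l.foldr (fun i h => (fun h' => pderiv i h')^[d i] h) f
        + l.foldr (fun i h => (fun h' => pderiv i h')^[d i] h) g := by
  induction l with
  | nil => rfl
  | cons a tl ih => simp [List.foldr_cons, ih, iter_add]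

lemma foldr_pderiv (l : List (Fin N)) (d : Fin N → ℕ) (i : Fin N) (f : MvPolynomial (Fin N) k) :
    l.foldr (fun j h => (fun h' => pderiv j h')^[d j] h) (pderiv i f)
      = pderiv i (l.foldr (fun j h => (fun h' => pderiv j h')^[d j] h) f) := by
  induction l with
  | nil => rfl
  | cons a tl ih => simp [List.foldr_cons, ih, iter_comm]

lemma foldr_congr (l : List (Fin N)) {d d' : Fin N → ℕ} (h : ∀ j ∈ l, d j = d' j)
    (f : MvPolynomial (Fin N) k) :
    l.foldr (fun j h => (fun h' => pderiv j h')^[d j] h) f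
      = l.foldr (fun j h => (fun h' => pderiv j h')^[d' j] h) f := by
  induction l with
  | nil => rfl
  | cons a tl ih =>
    simp only [List.foldr_cons, h a List.mem_cons_self,
      ih (fun j hj => h j (List.mem_cons_of_mem a hj))]

lemma foldr_step (l : List (Fin N)) (hl : l.Nodup) {i : Fin N} (hi : i ∈ l)
    (d : Fin N → ℕ) (hd : d i ≠ 0) (f : MvPolynomial (Fin N) k) :
    l.foldr (fun j h => (fun h' => pderiv j h')^[d j] h) f
      = l.foldr (fun j h => (fun h' => pderiv j h')^[Function.update d i (d i - 1) j] h)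
          (pderiv i f) := by
  induction l with
  | nil => exact absurd hi List.not_mem_nil
  | cons a tl ih =>
    rcases List.nodup_cons.1 hl with ⟨ha, htl⟩
    rcases eq_or_ne a i with rfl | hai
    · simp only [List.foldr_cons, Function.update_self]
      have hcong := foldr_congr (d := Function.update d a (d a - 1)) (d' := d) tl
        (fun j hj => Function.update_of_ne (show j ≠ a from fun hja => ha (hja ▸ hj)) _ _)
        (pderiv a f)
      rw [hcong, foldr_pderiv]
      obtain ⟨t, ht⟩ := Nat.exists_eq_succ_of_ne_zero hd
      rw [ht]
      simp only [Nat.succ_sub_one]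
      rw [Function.iterate_succ_apply]
    · have hitl : i ∈ tl := (List.mem_cons.1 hi).resolve_left (fun h => hai h.symm)
      simp only [List.foldr_cons, Function.update_of_ne hai, ih htl hitl]

lemma mderiv_add (d : Fin N → ℕ) (f g : MvPolynomial (Fin N) k) :
    mderiv d (f + g) = mderiv d f + mderiv d g := foldr_add _ d f g

lemma mderiv_zero' {d : Fin N → ℕ} (hd : ∀ i, d i = 0) (f : MvPolynomial (Fin N) k) :
    mderiv d f = f := by
  unfold mderiv
  have : ∀ l : List (Fin N),
      l.foldr (fun i g => (fun h => pderiv i h)^[d i] g) f = f := by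
    intro l
    induction l with
    | nil => rfl
    | cons a tl ih => simp [List.foldr_cons, hd a, ih]
  exact this _

lemma mderiv_step {d : Fin N → ℕ} {i : Fin N} (hd : d i ≠ 0) (f : MvPolynomial (Fin N) k) :
    mderiv d f = mderiv (Function.update d i (d i - 1)) (pderiv i f) :=
  foldr_step _ (List.nodup_finRange N) (List.mem_finRange i) d hd f

lemma mderiv_succ (e : Fin N → ℕ) (i : Fin N) (f : MvPolynomial (Fin N) k) :
    mderiv e (pderiv i f) = mderiv (Function.update e i (e i + 1)) f := by
  have h : Function.update e i (e i + 1) i ≠ 0 := by simp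
  rw [mderiv_step h f]
  congr 1
  · funext j
    rcases eq_or_ne j i with rfl | hj
    · simp
    · simp [Function.update_of_ne hj]

lemma sum_pos_exists {d : Fin N → ℕ} (h : ∑ i, d i ≠ 0) : ∃ i, d i ≠ 0 := by
  by_contra hc
  push_neg at hc
  exact h (Finset.sum_eq_zero fun i _ => hc i)

lemma eval_mderiv_mul (a : Fin N → k) :
    ∀ W (d : Fin N → ℕ), (∑ i, d i) = W → ∀ f g : MvPolynomial (Fin N) k,
      (∀ d' ≤ d, eval a (mderiv d' f) = 0) → eval a (mderiv d (f * g)) = 0 := by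
  intro W
  induction W using Nat.strong_induction_on with
  | _ W IH =>
    intro d hW f g hf
    rcases Nat.eq_zero_or_pos W with rfl | hWpos
    · have hd0 : ∀ i, d i = 0 := by
        intro i
        have := Finset.sum_eq_zero_iff.1 hW i (Finset.mem_univ i)
        exact this
      rw [mderiv_zero' hd0, map_mul]
      have := hf d le_rfl
      rw [mderiv_zero' hd0] at this
      rw [this, zero_mul]
    · obtain ⟨i, hi⟩ := sum_pos_exists (by omega : ∑ i, d i ≠ 0)
      set d' := Function.update d i (d i - 1) with hd'
      have hsum' : ∑ j, d' j = W - 1 := by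
        rw [hd']
        rw [Finset.sum_update_of_mem (Finset.mem_univ i), Finset.sdiff_singleton_eq_erase]
        have h1 := Finset.add_sum_erase Finset.univ d (Finset.mem_univ i)
        have h2 : 1 ≤ d i := Nat.one_le_iff_ne_zero.2 hi
        omega
      have hle' : ∀ j, d' j ≤ d j := by
        intro j
        rcases eq_or_ne j i with rfl | hj
        · simp [hd']
        · simp [hd', Function.update_of_ne hj]
      rw [mderiv_step hi, pderiv_mul, mderiv_add, map_add]
      have h1 : eval a (mderiv d' (pderiv i f * g)) = 0 := by
        refine IH (W - 1) (by omega) d' hsum' _ _ ?_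
        intro e he
        rw [mderiv_succ]
        refine hf _ ?_
        intro j
        rcases eq_or_ne j i with rfl | hj
        · simp only [Function.update_self]
          have h3 : e j ≤ d j - 1 := by simpa [hd'] using he j
          have h4 : 1 ≤ d j := Nat.one_le_iff_ne_zero.2 hi
          omega
        · rw [Function.update_of_ne hj]
          exact le_trans (he j) (hle' j)
      have h2 : eval a (mderiv d' (f * pderiv i g)) = 0 := by
        refine IH (W - 1) (by omega) d' hsum' _ _ ?_
        intro e he
        exact hf e (le_trans he (fun j => hle' j))
      rw [h1, h2, add_zero]

lemma lower_closed {D : Set (Fin N → ℕ)}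
    (hD : ∀ d ∈ D, ∀ i : Fin N, d i ≠ 0 → Function.update d i (d i - 1) ∈ D) :
    ∀ W (d : Fin N → ℕ), ∑ i, d i = W → d ∈ D → ∀ d' ≤ d, d' ∈ D := by
  intro W
  induction W using Nat.strong_induction_on with
  | _ W IH =>
    intro d hW hd d' hd'
    rcases eq_or_ne d' d with rfl | hne
    · exact hd
    · obtain ⟨i, hi⟩ := Function.ne_iff.1 hne
      have hlt : d' i < d i := lt_of_le_of_ne (hd' i) hi
      have hdi : d i ≠ 0 := by omega
      set e := Function.update d i (d i - 1) with he
      have heD : e ∈ D := hD d hd i hdi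
      have hsum : ∑ j, e j = W - 1 := by
        rw [he, Finset.sum_update_of_mem (Finset.mem_univ i), Finset.sdiff_singleton_eq_erase]
        have h1 := Finset.add_sum_erase Finset.univ d (Finset.mem_univ i)
        omega
      have hWpos : 0 < W := by
        have : 1 ≤ d i := by omega
        have h1 := Finset.single_le_sum (f := d) (fun j _ => Nat.zero_le _) (Finset.mem_univ i)
        omega
      refine IH (W - 1) (by omega) e hsum heD d' ?_
      intro j
      rcases eq_or_ne j i with rfl | hj
      · simp only [he, Function.update_self]; omega
      · rw [he, Function.update_of_ne hj]; exact hd' j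

section ringpart
variable {k' : Type*} [CommRing k']

lemma pderiv_mem_span_self {i₀ : Fin N} {c : k'} {m : ℕ} {f : MvPolynomial (Fin N) k'}
    (hf : f ∈ Ideal.span {(X i₀ - C c : MvPolynomial (Fin N) k') ^ m}) :
    pderiv i₀ f ∈ Ideal.span {(X i₀ - C c : MvPolynomial (Fin N) k') ^ (m - 1)} := by
  obtain ⟨g, rfl⟩ := Ideal.mem_span_singleton.1 hf
  rw [pderiv_mul, pderiv_pow]
  have hu : pderiv i₀ (X i₀ - C c : MvPolynomial (Fin N) k') = 1 := by
    rw [map_sub, pderiv_X_self, pderiv_C, sub_zero]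
  rw [hu]
  rcases Nat.eq_zero_or_pos m with rfl | hm
  · exact Ideal.mem_span_singleton.2 (by simpa using one_dvd _)
  · refine Ideal.mem_span_singleton.2 (dvd_add ⟨(m : MvPolynomial (Fin N) k') * g, by ring⟩ ?_)
    obtain ⟨m', rfl⟩ := Nat.exists_eq_succ_of_ne_zero (by omega : m ≠ 0)
    exact ⟨(X i₀ - C c) * pderiv i₀ g, by simp only [Nat.succ_sub_one]; rw [pow_succ]; ring⟩

lemma pderiv_mem_span_ne {i₀ : Fin N} {c : k'} {m : ℕ} {f : MvPolynomial (Fin N) k'}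
    (hf : f ∈ Ideal.span {(X i₀ - C c : MvPolynomial (Fin N) k') ^ m}) {i : Fin N}
    (hne : i ≠ i₀) :
    pderiv i f ∈ Ideal.span {(X i₀ - C c : MvPolynomial (Fin N) k') ^ m} := by
  obtain ⟨g, rfl⟩ := Ideal.mem_span_singleton.1 hf
  rw [pderiv_mul, pderiv_pow]
  have hu : pderiv i (X i₀ - C c : MvPolynomial (Fin N) k') = 0 := by
    rw [map_sub, pderiv_X_of_ne (Ne.symm hne), pderiv_C, sub_zero]
  rw [hu]
  exact Ideal.mem_span_singleton.2 ⟨pderiv i g, by ring⟩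

lemma mderiv_mem_span (i₀ : Fin N) (c : k') :
    ∀ W (d : Fin N → ℕ), ∑ i, d i = W → ∀ m (f : MvPolynomial (Fin N) k'),
      f ∈ Ideal.span {(X i₀ - C c : MvPolynomial (Fin N) k') ^ m} →
      mderiv d f ∈ Ideal.span {(X i₀ - C c : MvPolynomial (Fin N) k') ^ (m - d i₀)} := by
  intro W
  induction W using Nat.strong_induction_on with
  | _ W IH =>
    intro d hW m f hf
    rcases Nat.eq_zero_or_pos W with rfl | hWpos
    · have hd0 : ∀ i, d i = 0 := fun i => Finset.sum_eq_zero_iff.1 hW i (Finset.mem_univ i)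
      rw [mderiv_zero' hd0, hd0 i₀, Nat.sub_zero]
      exact hf
    · obtain ⟨i, hi⟩ := sum_pos_exists (by omega : ∑ i, d i ≠ 0)
      set d' := Function.update d i (d i - 1) with hd'
      have hsum' : ∑ j, d' j = W - 1 := by
        rw [hd', Finset.sum_update_of_mem (Finset.mem_univ i), Finset.sdiff_singleton_eq_erase]
        have h1 := Finset.add_sum_erase Finset.univ d (Finset.mem_univ i)
        have h2 : 1 ≤ d i := Nat.one_le_iff_ne_zero.2 hi
        omega
      rw [mderiv_step hi]
      rcases eq_or_ne i i₀ with rfl | hne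
      · have h1 := pderiv_mem_span_self hf
        have h2 := IH (W - 1) (by omega) d' hsum' _ _ h1
        have h3 : m - 1 - d' i = m - d i := by
          have h4 : d' i = d i - 1 := by simp [hd']
          have h5 : 1 ≤ d i := Nat.one_le_iff_ne_zero.2 hi
          omega
        rwa [h3] at h2
      · have h1 := pderiv_mem_span_ne hf hne
        have h2 := IH (W - 1) (by omega) d' hsum' _ _ h1
        have h3 : d' i₀ = d i₀ := by rw [hd', Function.update_of_ne (Ne.symm hne)]
        rwa [h3] at h2

end ringpart

lemma coprime_lin {k' : Type*} [Field k'] (i₀ : Fin N) {c c' : k'} (h : c ≠ c') :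
    IsCoprime (X i₀ - C c : MvPolynomial (Fin N) k') (X i₀ - C c') := by
  have hcc : c' - c ≠ 0 := sub_ne_zero.2 (Ne.symm h)
  refine ⟨C ((c' - c)⁻¹), -C ((c' - c)⁻¹), ?_⟩
  have key : (C ((c' - c)⁻¹) : MvPolynomial (Fin N) k') * (X i₀ - C c)
      + (-C ((c' - c)⁻¹)) * (X i₀ - C c') = C ((c' - c)⁻¹) * C (c' - c) := by
    rw [C_sub]; ring
  rw [key, ← C_mul, inv_mul_cancel₀ hcc, C_1]

lemma vset_add_closed {n : ℕ} {k : Type*} [Field k] {ι : Type*} [Fintype ι]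
    {p : ι → (Fin (n + 1) → k)} {D : ι → Finset (Fin (n + 1) → ℕ)}
    {f g : MvPolynomial (Fin (n + 1)) k} (hf : f ∈ vset p D) (hg : g ∈ vset p D) :
    f + g ∈ vset p D := by
  intro j d hd
  rw [mderiv_add, map_add, hf j d hd, hg j d hd, add_zero]

lemma vset_mul_closed {n : ℕ} {k : Type*} [Field k] {ι : Type*} [Fintype ι]
    {p : ι → (Fin (n + 1) → k)} {D : ι → Finset (Fin (n + 1) → ℕ)}
    (hl : ∀ j, IsLowerSetN (↑(D j) : Set (Fin (n + 1) → ℕ)))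
    {f : MvPolynomial (Fin (n + 1)) k} (hf : f ∈ vset p D) (g : MvPolynomial (Fin (n + 1)) k) :
    f * g ∈ vset p D := by
  intro j d hd
  refine eval_mderiv_mul (p j) (∑ i, d i) d rfl f g ?_
  intro d' hd'
  exact hf j d' (lower_closed (hl j) (∑ i, d i) d rfl (Finset.mem_coe.2 hd) d' hd')

lemma fibPoly_mem {n : ℕ} {k : Type*} [Field k] [DecidableEq k]
    {ι : Type*} [Fintype ι] [DecidableEq ι]
    (p : ι → (Fin (n + 1) → k)) (D : ι → Finset (Fin (n + 1) → ℕ)) :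
    fibPoly p D ∈ vset p D := by
  intro j d hd
  set L := Fin.last n with hL
  set c := p j L with hc
  set w := ((Finset.univ.filter (fun j' => p j' L = c)).sup
      (fun j' => (D j').sup (fun e => e L))) with hw
  have hcmem : c ∈ Finset.univ.image (fun j' => p j' L) :=
    Finset.mem_image_of_mem _ (Finset.mem_univ j)
  have hdw : d L ≤ w := by
    refine le_trans (Finset.le_sup (f := fun e => e L) hd) (Finset.le_sup ?_)
    exact Finset.mem_filter.2 ⟨Finset.mem_univ j, rfl⟩
  have hfib : fibPoly p D ∈ Ideal.span {(X L - C c : MvPolynomial (Fin (n + 1)) k) ^ (w + 1)} := by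
    refine Ideal.mem_span_singleton.2 ⟨∏ c' ∈ (Finset.univ.image (fun j' => p j' L)).erase c,
      (X L - C c') ^ (((Finset.univ.filter (fun j' => p j' L = c')).sup
        (fun j' => (D j').sup (fun e => e L))) + 1), ?_⟩
    exact (Finset.mul_prod_erase _ _ hcmem).symm
  have h2 := mderiv_mem_span L c (∑ i, d i) d rfl (w + 1) _ hfib
  obtain ⟨g, hg⟩ := Ideal.mem_span_singleton.1 h2
  rw [hg, map_mul, map_pow]
  have h3 : eval (p j) (X L - C c : MvPolynomial (Fin (n + 1)) k) = 0 := by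
    simp [hc]
  have hne : w + 1 - d L ≠ 0 := Nat.sub_ne_zero_of_lt (Nat.lt_succ_of_le hdw)
  rw [h3, zero_pow hne, zero_mul]

end helperlemmas

/-- If no point of `H₁` shares its last coordinate with a point of `H₂`, then
`I(H₁ ∪ H₂) = I(H₁) ∩ I(H₂)`; the fibre polynomials `p₁ ∈ I(H₁)`, `p₂ ∈ I(H₂)` are
coprime, and `f₁·p₂ + f₂·p₁ ∈ I(H₁ ∪ H₂)` for any `f₁ ∈ I(H₁)`, `f₂ ∈ I(H₂)`. -/
theorem union_vanishing_ideal {n : ℕ} {k : Type*} [Field k] [CharZero k] [DecidableEq k]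
    {t₁ t₂ : ℕ} (p₁ : Fin t₁ → (Fin (n + 1) → k)) (p₂ : Fin t₂ → (Fin (n + 1) → k))
    (hp₁ : Function.Injective p₁) (hp₂ : Function.Injective p₂)
    (D₁ : Fin t₁ → Finset (Fin (n + 1) → ℕ)) (D₂ : Fin t₂ → Finset (Fin (n + 1) → ℕ))
    (hl₁ : ∀ j, IsLowerSetN (↑(D₁ j) : Set (Fin (n + 1) → ℕ)))
    (hl₂ : ∀ j, IsLowerSetN (↑(D₂ j) : Set (Fin (n + 1) → ℕ)))
    (hne₁ : ∀ j, (D₁ j).Nonempty) (hne₂ : ∀ j, (D₂ j).Nonempty)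
    (hdisj : ∀ i j, p₁ i (Fin.last n) ≠ p₂ j (Fin.last n)) :
    vset (Sum.elim p₁ p₂) (Sum.elim D₁ D₂) = vset p₁ D₁ ∩ vset p₂ D₂ ∧
    fibPoly p₁ D₁ ∈ vset p₁ D₁ ∧ fibPoly p₂ D₂ ∈ vset p₂ D₂ ∧
    IsCoprime (fibPoly p₁ D₁) (fibPoly p₂ D₂) ∧
    ∀ f₁ ∈ vset p₁ D₁, ∀ f₂ ∈ vset p₂ D₂,
      f₁ * fibPoly p₂ D₂ + f₂ * fibPoly p₁ D₁ ∈ vset (Sum.elim p₁ p₂) (Sum.elim D₁ D₂) := by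
  have hpart1 : vset (Sum.elim p₁ p₂) (Sum.elim D₁ D₂) = vset p₁ D₁ ∩ vset p₂ D₂ := by
    ext f
    constructor
    · intro h
      exact ⟨fun j => h (Sum.inl j), fun j => h (Sum.inr j)⟩
    · rintro ⟨h1, h2⟩ (j | j) d hd
      · exact h1 j d hd
      · exact h2 j d hd
  have hfib1 := fibPoly_mem p₁ D₁
  have hfib2 := fibPoly_mem p₂ D₂
  refine ⟨hpart1, hfib1, hfib2, ?_, ?_⟩
  · unfold fibPoly
    refine IsCoprime.prod_left fun c hc => ?_
    refine IsCoprime.prod_right fun c' hc' => ?_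
    refine IsCoprime.pow ?_
    obtain ⟨a, -, rfl⟩ := Finset.mem_image.1 hc
    obtain ⟨b, -, rfl⟩ := Finset.mem_image.1 hc'
    exact coprime_lin _ (hdisj a b)
  · intro f₁ h₁ f₂ h₂
    rw [hpart1]
    constructor
    · refine vset_add_closed (vset_mul_closed hl₁ h₁ _) ?_
      rw [mul_comm]
      exact vset_mul_closed hl₁ hfib1 _
    · refine vset_add_closed ?_ (vset_mul_closed hl₂ h₂ _)
      rw [mul_comm]
      exact vset_mul_closed hl₂ hfib2 _
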